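/- For a convex differentiable function f with minimum value f_⋆ attained at x_⋆, one step of gradient descent with the Polyak step size γ = (f(x) - f_⋆)/‖∇f(x)‖² satisfies ‖x - γ∇f(x) - x_⋆‖² ≤ ‖x - x_⋆‖² - (f(x) - f_⋆)²/‖∇f(x)‖². -/

import Mathlib

open Filter Set Topology

lemma grad_convex_ineq {d : ℕ} (f : EuclideanSpace ℝ (Fin d) → ℝ)
    (hconv : ConvexOn ℝ Set.univ f) (hf : Differentiable ℝ f)
    (x y : EuclideanSpace ℝ (Fin d)) :
    f x + inner ℝ (gradient f x) (y - x) ≤ f y := by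
  set v := y - x with hv
  set φ : ℝ → ℝ := fun t => f (x + t • v) with hφdef
  have hc : HasDerivAt (fun t : ℝ => x + t • v) v 0 := by
    simpa using ((hasDerivAt_id (0:ℝ)).smul_const v).const_add x
  have hφ : HasDerivAt φ (inner ℝ (gradient f x) v) 0 := by
    have hF : HasFDerivAt f ((InnerProductSpace.toDual ℝ _) (gradient f x)) x :=
      hasGradientAt_iff_hasFDerivAt.mp (hf x).hasGradientAt
    have hF' : HasFDerivAt f ((InnerProductSpace.toDual ℝ _) (gradient f x))
        (x + (0:ℝ) • v) := by simpa using hF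
    exact hF'.comp_hasDerivAt (0 : ℝ) hc
  have hslope : Tendsto (slope φ 0) (𝓝[>] 0) (𝓝 (inner ℝ (gradient f x) v)) :=
    (hasDerivAt_iff_tendsto_slope.mp hφ).mono_left
      (nhdsWithin_mono _ (fun t ht => ne_of_gt ht))
  have hbound : ∀ᶠ t in 𝓝[>] (0:ℝ), slope φ 0 t ≤ f y - f x := by
    filter_upwards [Ioc_mem_nhdsGT_of_mem (by norm_num : (0:ℝ) ∈ Ico 0 1)] with t ht
    have ht0 : 0 < t := ht.1
    have hcomb := hconv.2 (mem_univ x) (mem_univ y) (by linarith [ht.2] : (0:ℝ) ≤ 1 - t)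
      (le_of_lt ht0) (by ring)
    have heq : (1 - t) • x + t • y = x + t • v := by rw [hv]; module
    rw [heq] at hcomb
    have hkey : φ t ≤ f x + t * (f y - f x) := by
      have : φ t ≤ (1 - t) * f x + t * f y := by simpa [hφdef, smul_eq_mul] using hcomb
      linarith
    have hφ0 : φ 0 = f x := by simp [hφdef]
    rw [slope_def_field, hφ0, sub_zero, div_le_iff₀ ht0]
    nlinarith
  have hle : inner ℝ (gradient f x) v ≤ f y - f x := le_of_tendsto hslope hbound
  linarith

/-- Polyak step size guarantee: for convex differentiable `f` with minimizer `x⋆`,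
one gradient step with `γ = (f(x)-f⋆)/‖∇f(x)‖²` contracts the squared distance by
`(f(x)-f⋆)²/‖∇f(x)‖²`. -/
theorem polyak_step_guarantee
    {d : ℕ} (f : EuclideanSpace ℝ (Fin d) → ℝ)
    (hconv : ConvexOn ℝ Set.univ f) (hf : Differentiable ℝ f)
    (xstar : EuclideanSpace ℝ (Fin d)) (hmin : ∀ y, f xstar ≤ f y)
    (x : EuclideanSpace ℝ (Fin d)) (hgrad : gradient f x ≠ 0) :
    let γ := (f x - f xstar) / ‖gradient f x‖ ^ 2
    ‖x - γ • gradient f x - xstar‖ ^ 2 ≤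
      ‖x - xstar‖ ^ 2 - (f x - f xstar) ^ 2 / ‖gradient f x‖ ^ 2 := by
  intro γ
  set g := gradient f x with hg
  have hG : (0:ℝ) < ‖g‖ ^ 2 := pow_pos (norm_pos_iff.mpr hgrad) 2
  have hΔ : 0 ≤ f x - f xstar := sub_nonneg.mpr (hmin x)
  have hγnn : 0 ≤ γ := div_nonneg hΔ (le_of_lt hG)
  have hinner : f x - f xstar ≤ inner ℝ g (x - xstar) := by
    have h1 := grad_convex_ineq f hconv hf x xstar
    have h2 : (inner ℝ g (xstar - x) : ℝ) = - inner ℝ g (x - xstar) := by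
      rw [← inner_neg_right]; congr 1; abel
    rw [← hg, h2] at h1
    linarith
  have hexp : ‖x - γ • g - xstar‖ ^ 2 =
      ‖x - xstar‖ ^ 2 - 2 * γ * inner ℝ g (x - xstar) + γ ^ 2 * ‖g‖ ^ 2 := by
    have h3 : x - γ • g - xstar = (x - xstar) - γ • g := by abel
    rw [h3, norm_sub_sq_real, real_inner_smul_right, real_inner_comm, norm_smul,
      mul_pow, Real.norm_eq_abs, sq_abs]
    ring
  rw [hexp]
  have hγ : γ = (f x - f xstar) / ‖g‖ ^ 2 := rfl
  have h1 : γ * ‖g‖ ^ 2 = f x - f xstar := by rw [hγ]; field_simp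
  have h2 : (f x - f xstar) ^ 2 / ‖g‖ ^ 2 = γ * (f x - f xstar) := by
    rw [hγ]; field_simp
  have h3 : γ ^ 2 * ‖g‖ ^ 2 = γ * (f x - f xstar) := by
    rw [pow_two, mul_assoc, h1]
  rw [h2, h3]
  nlinarith [mul_le_mul_of_nonneg_left hinner hγnn]
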